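/- (Abstract Itô isometry inequality.) Let (E_t) be a resolution of identity on a complex Hilbert space H, M ∈ H, M_t := E_t M, and μ the Borel measure μ(α) = ‖E(α)M‖². Let A(t) = Σ_{k=0}^{n-1} A_k 1_{(t_k,t_{k+1}]}(t) be a simple adapted operator-valued function, where each A_k is a bounded operator on the span of increments {M_{s_2} − M_{s_1} : (s_1,s_2] ⊆ (t_k,T]} with operator norm ‖A_k‖_{L_M(t_k)}, and each A_k commutes partially with the resolution of identity: A_k E_s g = E_s A_k g for all g in this span and all s ∈ [t_k, T]. Then ‖Σ_{k=0}^{n-1} A_k (M_{t_{k+1}} − M_{t_k})‖²_H ≤ Σ_{k=0}^{n-1} ‖A_k‖²_{L_M(t_k)} μ((t_k,t_{k+1}]). -/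

import Mathlib

open scoped InnerProductSpace ComplexConjugate

/-- The span of increments `M_{s₂} - M_{s₁}` with `(s₁,s₂] ⊆ (t,T]`. -/
def HMspan {H : Type*} [NormedAddCommGroup H] [InnerProductSpace ℂ H]
    (E : ℝ → H →L[ℂ] H) (M : H) (t T : ℝ) : Submodule ℂ H :=
  Submodule.span ℂ {g | ∃ s₁ s₂ : ℝ, t ≤ s₁ ∧ s₁ < s₂ ∧ s₂ ≤ T ∧ g = E s₂ M - E s₁ M}

/-- abstract Itô isometry inequality: for a simple adapted operator-valued
function `A(t) = Σ_k A_k 1_{(t_k,t_{k+1}]}(t)` whose values are `L_M(t_k)`-measurable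
(condition (i): the restricted norms are constant in `s ∈ [t_k,T)`; condition (ii): partial
commutation with `E`),
`‖Σ_k A_k(M_{t_{k+1}} - M_{t_k})‖² ≤ Σ_k ‖A_k‖²_{L_M(t_k)} μ((t_k,t_{k+1}])`,
where `μ((t_k,t_{k+1}]) = ‖M_{t_{k+1}} - M_{t_k}‖²`. -/
theorem stmt3 {H : Type*} [NormedAddCommGroup H] [InnerProductSpace ℂ H] [CompleteSpace H]
    (T : ℝ) (hT : 0 < T) (E : ℝ → H →L[ℂ] H) (M : H)
    (hproj : ∀ t, IsIdempotentElem (E t))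
    (hsa : ∀ t, ContinuousLinearMap.adjoint (E t) = E t)
    (hmono : ∀ s t, s ≤ t → (E t).comp (E s) = E s ∧ (E s).comp (E t) = E s)
    (hT1 : E T = 1)
    (n : ℕ) (t : Fin (n + 1) → ℝ) (ht0 : t 0 = 0) (htlast : t (Fin.last n) = T)
    (htmono : StrictMono t)
    (A : Fin n → H →L[ℂ] H)
    (hnormeq : ∀ (k : Fin n) (s : ℝ), t k.castSucc ≤ s → s < T →
      ‖(A k).comp (HMspan E M (t k.castSucc) T).subtypeL‖
        = ‖(A k).comp (HMspan E M s T).subtypeL‖)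
    (hcomm : ∀ (k : Fin n), ∀ g ∈ HMspan E M (t k.castSucc) T, ∀ s : ℝ,
      t k.castSucc ≤ s → s ≤ T → A k (E s g) = E s (A k g)) :
    ‖∑ k : Fin n, A k (E (t k.succ) M - E (t k.castSucc) M)‖ ^ 2
      ≤ ∑ k : Fin n, ‖(A k).comp (HMspan E M (t k.castSucc) T).subtypeL‖ ^ 2
          * ‖E (t k.succ) M - E (t k.castSucc) M‖ ^ 2 := by
  set Δ : Fin n → H := fun k => E (t k.succ) M - E (t k.castSucc) M with hΔ
  set v : Fin n → H := fun k => A k (Δ k) with hv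
  have htT : ∀ i : Fin (n + 1), t i ≤ T := fun i =>
    htlast ▸ htmono.monotone (Fin.le_last i)
  have hidem : ∀ s (x : H), E s (E s x) = E s x := by
    intro s x
    have h := hproj s
    calc E s (E s x) = (E s * E s) x := rfl
      _ = E s x := by rw [h]
  have hEsmall : ∀ s u : ℝ, s ≤ u → ∀ x : H, E u (E s x) = E s x := by
    intro s u h x
    have h2 := (hmono s u h).1
    calc E u (E s x) = ((E u).comp (E s)) x := rfl
      _ = E s x := by rw [h2]
  have hEbig : ∀ s u : ℝ, s ≤ u → ∀ x : H, E s (E u x) = E s x := by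
    intro s u h x
    have h2 := (hmono s u h).2
    calc E s (E u x) = ((E s).comp (E u)) x := rfl
      _ = E s x := by rw [h2]
  have hstep : ∀ k : Fin n, t k.castSucc < t k.succ := fun k =>
    htmono Fin.castSucc_lt_succ
  have hΔmem : ∀ k : Fin n, Δ k ∈ HMspan E M (t k.castSucc) T := fun k =>
    Submodule.subset_span ⟨t k.castSucc, t k.succ, le_refl _, hstep k, htT _, rfl⟩
  have hfix : ∀ (k : Fin n) (s : ℝ), t k.succ ≤ s → E s (Δ k) = Δ k := by
    intro k s hs
    rw [hΔ]
    simp only [map_sub]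
    rw [hEsmall _ _ hs, hEsmall _ _ (le_trans (hstep k).le hs)]
  have hkill : ∀ k : Fin n, E (t k.castSucc) (Δ k) = 0 := by
    intro k
    rw [hΔ]
    simp only [map_sub]
    rw [hEbig _ _ (hstep k).le, hidem, sub_self]
  have hvfix : ∀ (k : Fin n) (s : ℝ), t k.succ ≤ s → s ≤ T → E s (v k) = v k := by
    intro k s hs hsT
    rw [hv]
    simp only
    rw [← hcomm k _ (hΔmem k) s (le_trans (hstep k).le hs) hsT, hfix k s hs]
  have hvkill : ∀ k : Fin n, E (t k.castSucc) (v k) = 0 := by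
    intro k
    rw [hv]
    simp only
    rw [← hcomm k _ (hΔmem k) (t k.castSucc) (le_refl _) (htT _), hkill, map_zero]
  have hEadj : ∀ (s : ℝ) (x y : H), ⟪E s x, y⟫_ℂ = ⟪x, E s y⟫_ℂ := by
    intro s x y
    conv_lhs => rw [← hsa s]
    rw [ContinuousLinearMap.adjoint_inner_left]
  have horth : ∀ j k : Fin n, j < k → ⟪v j, v k⟫_ℂ = 0 := by
    intro j k hjk
    have h1 : t j.succ ≤ t k.castSucc := by
      apply htmono.monotone
      simp only [Fin.le_def, Fin.lt_def, Fin.val_succ, Fin.coe_castSucc] at hjk ⊢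
      omega
    have h2 : E (t k.castSucc) (v j) = v j := hvfix j _ h1 (htT _)
    calc ⟪v j, v k⟫_ℂ = ⟪E (t k.castSucc) (v j), v k⟫_ℂ := by rw [h2]
      _ = ⟪v j, E (t k.castSucc) (v k)⟫_ℂ := hEadj _ _ _
      _ = 0 := by rw [hvkill, inner_zero_right]
  have horth' : ∀ j k : Fin n, j ≠ k → ⟪v j, v k⟫_ℂ = 0 := by
    intro j k hjk
    rcases lt_or_gt_of_ne hjk with h | h
    · exact horth j k h
    · rw [← inner_conj_symm, horth k j h, map_zero]
  have hpyth : ‖∑ k : Fin n, v k‖ ^ 2 = ∑ k : Fin n, ‖v k‖ ^ 2 := by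
    have h1 : (⟪∑ j : Fin n, v j, ∑ k : Fin n, v k⟫_ℂ)
        = ∑ k : Fin n, ⟪v k, v k⟫_ℂ := by
      rw [sum_inner]
      refine Finset.sum_congr rfl fun j _ => ?_
      rw [inner_sum]
      exact Finset.sum_eq_single j (fun k _ hk => horth' j k (Ne.symm hk))
        (fun hj => absurd (Finset.mem_univ j) hj)
    calc ‖∑ k : Fin n, v k‖ ^ 2
        = RCLike.re (⟪∑ j : Fin n, v j, ∑ k : Fin n, v k⟫_ℂ) :=
          (inner_self_eq_norm_sq (𝕜 := ℂ) _).symm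
      _ = RCLike.re (∑ k : Fin n, ⟪v k, v k⟫_ℂ) := by rw [h1]
      _ = ∑ k : Fin n, RCLike.re (⟪v k, v k⟫_ℂ) := by
          exact map_sum (RCLike.re (K := ℂ)) _ _
      _ = ∑ k : Fin n, ‖v k‖ ^ 2 :=
          Finset.sum_congr rfl fun k _ => inner_self_eq_norm_sq (𝕜 := ℂ) (v k)
  have hgoal : (∑ k : Fin n, A k (E (t k.succ) M - E (t k.castSucc) M))
      = ∑ k : Fin n, v k := rfl
  rw [hgoal, hpyth]
  refine Finset.sum_le_sum fun k _ => ?_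
  have hb : ‖v k‖ ≤ ‖(A k).comp (HMspan E M (t k.castSucc) T).subtypeL‖ * ‖Δ k‖ := by
    have heq : v k = ((A k).comp (HMspan E M (t k.castSucc) T).subtypeL)
        ⟨Δ k, hΔmem k⟩ := rfl
    have hle := ((A k).comp (HMspan E M (t k.castSucc) T).subtypeL).le_opNorm
      ⟨Δ k, hΔmem k⟩
    simpa [heq] using hle
  calc ‖v k‖ ^ 2 ≤ (‖(A k).comp (HMspan E M (t k.castSucc) T).subtypeL‖ * ‖Δ k‖) ^ 2 :=
        pow_le_pow_left₀ (norm_nonneg _) hb 2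
    _ = ‖(A k).comp (HMspan E M (t k.castSucc) T).subtypeL‖ ^ 2 * ‖Δ k‖ ^ 2 := mul_pow _ _ _
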